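/- arXiv:1511.05908 — 2 statements merged into one kernel-verified Lean document; each statement's English description precedes it below -/
import Mathlib

section
/- Let 0 < ρ < 1, η > 0, ζ ∈ ℝ³ with ζ ≠ 0, and fix ν ∈ (0,1). For x in the cone Ξ₊(ν) = {x : ⟨x,ζ⟩ ≥ ν|x||ζ|}, the function Φ(x) = η ∫₀^∞ (⟨x + tζ⟩^{-ρ} − ⟨tζ⟩^{-ρ}) dt is well defined, i.e. the improper integral converges absolutely. -/
open MeasureTheory

/-- Difference bound: for `0 ≤ b ≤ a` and `0 ≤ s ≤ 1`,
`(1+b)^(-s) - (1+a)^(-s) ≤ s * (1+b)^(-s-1) * (a-b)`. -/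
lemma aux_diff_bound (s a b : ℝ) (hs0 : 0 ≤ s) (hs1 : s ≤ 1) (hb : 0 ≤ b) (hab : b ≤ a) :
    (1 + b) ^ (-s) - (1 + a) ^ (-s) ≤ s * (1 + b) ^ (-s - 1) * (a - b) := by
  have hb1 : (0:ℝ) < 1 + b := by linarith
  have ha1 : (0:ℝ) < 1 + a := by linarith
  set u : ℝ := (1 + a) / (1 + b) with hu
  have hu1 : 1 ≤ u := (one_le_div hb1).mpr (by linarith)
  have hfac : (1 + a) = (1 + b) * u := by rw [hu, mul_comm, div_mul_cancel₀ _ hb1.ne']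
  have h1 : (1 + a) ^ (-s) = (1 + b) ^ (-s) * u ^ (-s) := by
    rw [hfac, Real.mul_rpow hb1.le (by linarith)]
  -- Bernoulli: u^s ≤ 1 + s*(u-1), hence 1 - u^(-s) ≤ u^s - 1 ≤ s*(u-1)
  have hbern : u ^ s ≤ 1 + s * (u - 1) := by
    have := rpow_one_add_le_one_add_mul_self (s := u - 1) (by linarith) hs0 hs1
    simpa using this
  have hus : 1 ≤ u ^ s := Real.one_le_rpow hu1 hs0
  have huneg : u ^ (-s) = (u ^ s)⁻¹ := by
    rw [Real.rpow_neg (by linarith)]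
  have h2 : 1 - u ^ (-s) ≤ s * (u - 1) := by
    have hpos : (0:ℝ) < u ^ s := lt_of_lt_of_le one_pos hus
    have hvi : u ^ s * (u ^ s)⁻¹ = 1 := mul_inv_cancel₀ hpos.ne'
    have h3 : 1 - u ^ (-s) ≤ u ^ s - 1 := by
      rw [huneg]
      nlinarith [sq_nonneg (u ^ s - 1), inv_nonneg.mpr hpos.le]
    linarith [hbern]
  have h4 : (1 + b) ^ (-s) - (1 + a) ^ (-s) = (1 + b) ^ (-s) * (1 - u ^ (-s)) := by
    rw [h1]; ring
  have h5 : (1 + b) ^ (-s) * (u - 1) = (1 + b) ^ (-s - 1) * (a - b) := by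
    have : u - 1 = (a - b) / (1 + b) := by
      rw [eq_div_iff hb1.ne', hu, sub_mul, div_mul_cancel₀ _ hb1.ne']; ring
    rw [this, Real.rpow_sub hb1, Real.rpow_one]
    field_simp
    try ring
  have hpow : (0:ℝ) ≤ (1 + b) ^ (-s) := Real.rpow_nonneg hb1.le _
  calc (1 + b) ^ (-s) - (1 + a) ^ (-s) = (1 + b) ^ (-s) * (1 - u ^ (-s)) := h4
    _ ≤ (1 + b) ^ (-s) * (s * (u - 1)) := by
        apply mul_le_mul_of_nonneg_left h2 hpow
    _ = s * ((1 + b) ^ (-s) * (u - 1)) := by ring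
    _ = s * (1 + b) ^ (-s - 1) * (a - b) := by rw [h5]; ring

set_option maxHeartbeats 1000000 in
/-- For `0 < ρ < 1`, `η > 0`, `ζ ≠ 0`, `ν ∈ (0,1)`, and `x` in the cone
`Ξ₊(ν) = {x : ⟨x,ζ⟩ ≥ ν|x||ζ|}`, the improper integral defining
`Φ(x) = η ∫₀^∞ (⟨x + tζ⟩^{-ρ} − ⟨tζ⟩^{-ρ}) dt` converges absolutely. -/
theorem phase_integral_converges (ρ η ν : ℝ) (hρ0 : 0 < ρ) (hρ1 : ρ < 1) (hη : 0 < η)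
    (hν0 : 0 < ν) (hν1 : ν < 1) (ζ x : EuclideanSpace ℝ (Fin 3)) (hζ : ζ ≠ 0)
    (hx : ν * (‖x‖ * ‖ζ‖) ≤ (inner ℝ x ζ : ℝ)) :
    IntegrableOn
      (fun t : ℝ => η * ((1 + ‖x + t • ζ‖ ^ 2) ^ (-(ρ / 2)) - (1 + ‖t • ζ‖ ^ 2) ^ (-(ρ / 2))))
      (Set.Ici (0 : ℝ)) := by
  set s : ℝ := ρ / 2 with hs
  have hs0 : 0 < s := by positivity
  have hs1 : s ≤ 1 := by rw [hs]; linarith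
  set F : ℝ → ℝ :=
    fun t : ℝ => η * ((1 + ‖x + t • ζ‖ ^ 2) ^ (-s) - (1 + ‖t • ζ‖ ^ 2) ^ (-s)) with hF
  -- continuity
  have hcont : Continuous F := by
    apply Continuous.mul continuous_const
    apply Continuous.sub
    · apply Continuous.rpow_const
      · continuity
      · intro t; left; positivity
    · apply Continuous.rpow_const
      · continuity
      · intro t; left; positivity
  have hζnorm : (0:ℝ) < ‖ζ‖ := norm_pos_iff.mpr hζ
  set c : ℝ := ‖ζ‖ ^ 2 with hc
  have hcpos : (0:ℝ) < c := by positivity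
  have hinner : (0:ℝ) ≤ (inner ℝ x ζ : ℝ) := le_trans (by positivity) hx
  have hCS : (inner ℝ x ζ : ℝ) ≤ ‖x‖ * ‖ζ‖ := real_inner_le_norm x ζ
  -- split
  have hsplit : Set.Ici (0:ℝ) = Set.Icc 0 1 ∪ Set.Ioi 1 := by
    rw [Set.Icc_union_Ioi_eq_Ici]; norm_num
  rw [hsplit]
  apply IntegrableOn.union
  · exact hcont.integrableOn_Icc
  · -- majorant on Ioi 1
    set K : ℝ := η * s * c ^ (-s - 1) * (‖x‖ ^ 2 + 2 * (‖x‖ * ‖ζ‖)) with hK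
    have hKpos : 0 ≤ K := by positivity
    have hmaj : IntegrableOn (fun t : ℝ => K * t ^ (-(1 + ρ))) (Set.Ioi 1) :=
      (integrableOn_Ioi_rpow_of_lt (by linarith) one_pos).const_mul K
    apply Integrable.mono' hmaj (hcont.aestronglyMeasurable.restrict)
    rw [ae_restrict_iff' measurableSet_Ioi]
    filter_upwards with t ht
    simp only [Set.mem_Ioi] at ht
    have ht0 : (0:ℝ) < t := lt_trans one_pos ht
    set A : ℝ := ‖x + t • ζ‖ ^ 2 with hA
    set B : ℝ := ‖t • ζ‖ ^ 2 with hB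
    have hBval : B = t ^ 2 * c := by
      rw [hB, norm_smul, mul_pow, hc]
      simp [abs_of_pos ht0]
    have hAB : A = ‖x‖ ^ 2 + 2 * (t * (inner ℝ x ζ : ℝ)) + B := by
      rw [hA, hB, @norm_add_sq_real, real_inner_smul_right]
      try ring
    have hBA : B ≤ A := by
      rw [hAB]; nlinarith
    have hB0 : 0 ≤ B := by positivity
    have hdiff : (1 + B) ^ (-s) - (1 + A) ^ (-s) ≤ s * (1 + B) ^ (-s - 1) * (A - B) :=
      aux_diff_bound s A B hs0.le hs1 hB0 hBA
    -- bound (1+B)^(-s-1) ≤ (t^2*c)^(-s-1)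
    have hBpos : (0:ℝ) < t ^ 2 * c := by positivity
    have hpow1 : (1 + B) ^ (-s - 1) ≤ (t ^ 2 * c) ^ (-s - 1) := by
      apply Real.rpow_le_rpow_of_nonpos hBpos
      · rw [hBval]; linarith
      · linarith
    have hABle : A - B ≤ t * (‖x‖ ^ 2 + 2 * (‖x‖ * ‖ζ‖)) := by
      rw [hAB]
      have h1 : t * (inner ℝ x ζ : ℝ) ≤ t * (‖x‖ * ‖ζ‖) :=
        mul_le_mul_of_nonneg_left hCS ht0.le
      nlinarith
    have htpow : (t ^ 2 * c) ^ (-s - 1) = t ^ (-2 * s - 2) * c ^ (-s - 1) := by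
      rw [Real.mul_rpow (by positivity) hcpos.le]
      congr 1
      rw [← Real.rpow_natCast t 2, ← Real.rpow_mul ht0.le]
      congr 1
      push_cast
      ring
    -- norm of F t
    have hFnonpos : F t ≤ 0 := by
      rw [hF]
      apply mul_nonpos_of_nonneg_of_nonpos hη.le
      have : (1 + A) ^ (-s) ≤ (1 + B) ^ (-s) :=
        Real.rpow_le_rpow_of_nonpos (by linarith) (by linarith) (by linarith)
      simp only [← hA, ← hB]
      linarith
    have hnormF : ‖F t‖ = η * ((1 + B) ^ (-s) - (1 + A) ^ (-s)) := by
      rw [Real.norm_eq_abs, abs_of_nonpos hFnonpos, hF]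
      simp only [← hA, ← hB]
      ring
    rw [hnormF]
    have hchain : η * ((1 + B) ^ (-s) - (1 + A) ^ (-s))
        ≤ η * (s * ((t ^ 2 * c) ^ (-s - 1)) * (t * (‖x‖ ^ 2 + 2 * (‖x‖ * ‖ζ‖)))) := by
      apply mul_le_mul_of_nonneg_left _ hη.le
      calc (1 + B) ^ (-s) - (1 + A) ^ (-s) ≤ s * (1 + B) ^ (-s - 1) * (A - B) := hdiff
        _ ≤ s * ((t ^ 2 * c) ^ (-s - 1)) * (t * (‖x‖ ^ 2 + 2 * (‖x‖ * ‖ζ‖))) := by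
            apply mul_le_mul
            · exact mul_le_mul_of_nonneg_left hpow1 hs0.le
            · exact hABle
            · linarith [hBA]
            · exact mul_nonneg hs0.le (Real.rpow_nonneg hBpos.le _)
    refine hchain.trans (le_of_eq ?_)
    have ht1 : t ^ (-(1 + ρ)) = t ^ (-2 * s - 2) * t := by
      rw [show -(1 + ρ) = (-2 * s - 2) + 1 by rw [hs]; ring, Real.rpow_add ht0,
        Real.rpow_one]
    rw [htpow, hK, ht1]
    ring
end

section
/- Let 0 < ρ < 1, η > 0, ζ ∈ ℝ³ with |ζ| bounded between two positive constants, and ν ∈ (0,1). For x in the cone Ξ₊(ν) = {x : ⟨x,ζ⟩ ≥ ν|x||ζ|}, the function Φ(x) = η ∫₀^∞ (⟨x + tζ⟩^{-ρ} − ⟨tζ⟩^{-ρ}) dt satisfies |Φ(x)| ≤ C (1 + |x|)^{1-ρ} for a constant C depending only on ρ, η, ν, and the bounds on |ζ|. -/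
set_option maxHeartbeats 1000000

open MeasureTheory Set

lemma aux_mvt {e u v : ℝ} (he : 0 < e) (hu : 0 ≤ u) (huv : u ≤ v) :
    (1 + u) ^ (-e) - (1 + v) ^ (-e) ≤ e * (1 + u) ^ (-e - 1) * (v - u) := by
  rcases eq_or_lt_of_le huv with rfl | hlt
  · simp
  have h1u : (0:ℝ) < 1 + u := by linarith
  have hcont : ContinuousOn (fun s : ℝ => (1 + s) ^ (-e)) (Icc u v) := by
    intro s hs
    have hs0 : (1:ℝ) + s ≠ 0 := by have := hs.1; intro h; linarith
    exact ((continuous_const.add continuous_id).continuousAt.rpow_const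
      (Or.inl hs0)).continuousWithinAt
  have hderiv : ∀ s ∈ Ioo u v,
      HasDerivAt (fun s : ℝ => (1 + s) ^ (-e)) (-e * (1 + s) ^ (-e - 1)) s := by
    intro s hs
    have hs0 : (1:ℝ) + s ≠ 0 := by have := hs.1; intro h; linarith
    have h1 := Real.hasDerivAt_rpow_const (x := 1 + s) (p := -e) (Or.inl hs0)
    have h2 : HasDerivAt (fun s : ℝ => 1 + s) 1 s := (hasDerivAt_id s).const_add 1
    have := h1.comp s h2
    simpa [sub_eq_add_neg, neg_add, Function.comp_def] using this
  obtain ⟨c, hc, hceq⟩ := exists_hasDerivAt_eq_slope _ _ hlt hcont hderiv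
  have hvu : (0:ℝ) < v - u := by linarith
  have heq : (1 + u) ^ (-e) - (1 + v) ^ (-e) = e * (1 + c) ^ (-e - 1) * (v - u) := by
    field_simp at hceq
    nlinarith [hceq]
  rw [heq]
  have hmono : (1 + c) ^ (-e - 1) ≤ (1 + u) ^ (-e - 1) :=
    Real.rpow_le_rpow_of_nonpos h1u (by linarith [hc.1]) (by linarith)
  gcongr


/-- For `0 < ρ < 1`, `η > 0`, `ν ∈ (0,1)`, `0 < c₁ ≤ |ζ| ≤ c₂`, and `x` in the cone
`Ξ₊(ν) = {x : ⟨x,ζ⟩ ≥ ν|x||ζ|}`, the phase function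
`Φ(x) = η ∫₀^∞ (⟨x + tζ⟩^{-ρ} − ⟨tζ⟩^{-ρ}) dt` satisfies
`|Φ(x)| ≤ C (1 + |x|)^{1-ρ}` with `C` depending only on `ρ, η, ν, c₁, c₂`. -/
theorem phase_bound (ρ η ν c₁ c₂ : ℝ) (hρ0 : 0 < ρ) (hρ1 : ρ < 1) (hη : 0 < η)
    (hν0 : 0 < ν) (hν1 : ν < 1) (hc₁ : 0 < c₁) (hc₁₂ : c₁ ≤ c₂) :
    ∃ C > 0, ∀ ζ x : EuclideanSpace ℝ (Fin 3), c₁ ≤ ‖ζ‖ → ‖ζ‖ ≤ c₂ →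
      ν * (‖x‖ * ‖ζ‖) ≤ (inner ℝ x ζ : ℝ) →
      |η * ∫ t in Set.Ici (0 : ℝ),
          ((1 + ‖x + t • ζ‖ ^ 2) ^ (-(ρ / 2)) - (1 + ‖t • ζ‖ ^ 2) ^ (-(ρ / 2)))|
        ≤ C * (1 + ‖x‖) ^ (1 - ρ) := by
  have hc₂ : 0 < c₂ := lt_of_lt_of_le hc₁ hc₁₂
  refine ⟨η * (2 / (c₁ * (1 - ρ)) + 1 / (2 * c₁) + c₂ / c₁ ^ 2),
    by have : (0:ℝ) < 1 - ρ := by linarith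
       positivity, ?_⟩
  intro ζ x hζ₁ hζ₂ hcone
  set e : ℝ := ρ / 2 with he_def
  have he : 0 < e := by positivity
  have hζ0 : (0:ℝ) < ‖ζ‖ := hc₁.trans_le hζ₁
  have hn : (0:ℝ) ≤ ‖x‖ := norm_nonneg x
  have hip : (0:ℝ) ≤ (inner ℝ x ζ : ℝ) := le_trans (by positivity) hcone
  set n : ℝ := ‖x‖ with hn_def
  set T : ℝ := (1 + n) / c₁ with hT_def
  have hT : 0 < T := by positivity
  set g : ℝ → ℝ := fun t =>
    (1 + ‖x + t • ζ‖ ^ 2) ^ (-e) - (1 + ‖t • ζ‖ ^ 2) ^ (-e) with hg_def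
  set h : ℝ → ℝ := fun t => if t ≤ T then 2 * (c₁ * t) ^ (-ρ)
      else e * (c₁ * t) ^ (-ρ - 2) * (n ^ 2 + 2 * t * c₂ * n) with hh_def
  -- pointwise bound
  have key : ∀ t : ℝ, t ∈ Ioi (0:ℝ) → |g t| ≤ h t := by
    intro t ht
    rw [mem_Ioi] at ht
    have hb : ‖t • ζ‖ ^ 2 = t ^ 2 * ‖ζ‖ ^ 2 := by
      rw [norm_smul, Real.norm_eq_abs, abs_of_pos ht]; ring
    have ha : ‖x + t • ζ‖ ^ 2 = ‖x‖ ^ 2 + 2 * (t * (inner ℝ x ζ : ℝ)) + t ^ 2 * ‖ζ‖ ^ 2 := by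
      rw [norm_add_sq_real, real_inner_smul_right, norm_smul, Real.norm_eq_abs,
        abs_of_pos ht]; ring
    have hba : ‖t • ζ‖ ^ 2 ≤ ‖x + t • ζ‖ ^ 2 := by rw [ha, hb]; nlinarith
    have hlow : (c₁ * t) ^ 2 ≤ ‖t • ζ‖ ^ 2 := by
      rw [hb]
      have h2 : c₁ * c₁ ≤ ‖ζ‖ * ‖ζ‖ := mul_le_mul hζ₁ hζ₁ hc₁.le hζ0.le
      nlinarith [sq_nonneg t, h2]
    have hCS : (inner ℝ x ζ : ℝ) ≤ n * c₂ :=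
      le_trans (real_inner_le_norm x ζ) (by nlinarith)
    have hdiff : ‖x + t • ζ‖ ^ 2 - ‖t • ζ‖ ^ 2 ≤ n ^ 2 + 2 * t * c₂ * n := by
      rw [ha, hb]; rw [← hn_def]; nlinarith
    have hct : 0 < c₁ * t := by positivity
    have hct2 : (0:ℝ) < (c₁ * t) ^ 2 := by positivity
    have hpow : ∀ q : ℝ, (((c₁ * t) ^ 2 : ℝ)) ^ q = (c₁ * t) ^ (2 * q) := by
      intro q
      rw [← Real.rpow_natCast (c₁ * t) 2, ← Real.rpow_mul hct.le]
      norm_num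
    have hA : ∀ s : ℝ, (c₁ * t) ^ 2 ≤ 1 + s → (1 + s) ^ (-e) ≤ (c₁ * t) ^ (-ρ) := by
      intro s hs
      calc (1 + s) ^ (-e) ≤ (((c₁ * t) ^ 2 : ℝ)) ^ (-e) :=
            Real.rpow_le_rpow_of_nonpos hct2 hs (by linarith)
        _ = (c₁ * t) ^ (2 * (-e)) := hpow _
        _ = (c₁ * t) ^ (-ρ) := by congr 1; rw [he_def]; ring
    have hP : 0 < (1 + ‖x + t • ζ‖ ^ 2) ^ (-e) := Real.rpow_pos_of_pos (by positivity) _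
    have hQ : 0 < (1 + ‖t • ζ‖ ^ 2) ^ (-e) := Real.rpow_pos_of_pos (by positivity) _
    have h1 := hA (‖x + t • ζ‖ ^ 2) (by linarith [hlow, hba])
    have h2 := hA (‖t • ζ‖ ^ 2) (by linarith [hlow])
    by_cases htT : t ≤ T
    · simp only [hg_def, hh_def, if_pos htT]
      rw [abs_le]
      constructor <;> nlinarith
    · simp only [hg_def, hh_def, if_neg htT]
      have hmvt := aux_mvt he (by positivity : (0:ℝ) ≤ ‖t • ζ‖ ^ 2) hba
      have hle : (1 + ‖x + t • ζ‖ ^ 2) ^ (-e) ≤ (1 + ‖t • ζ‖ ^ 2) ^ (-e) :=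
        Real.rpow_le_rpow_of_nonpos (by positivity) (by linarith) (by linarith)
      rw [abs_of_nonpos (by linarith)]
      have hstep : (1 + ‖t • ζ‖ ^ 2) ^ (-e - 1) ≤ (c₁ * t) ^ (-ρ - 2) := by
        calc (1 + ‖t • ζ‖ ^ 2) ^ (-e - 1)
            ≤ (((c₁ * t) ^ 2 : ℝ)) ^ (-e - 1) :=
              Real.rpow_le_rpow_of_nonpos hct2 (by linarith) (by linarith)
          _ = (c₁ * t) ^ (2 * (-e - 1)) := hpow _
          _ = (c₁ * t) ^ (-ρ - 2) := by congr 1; rw [he_def]; ring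
      calc -((1 + ‖x + t • ζ‖ ^ 2) ^ (-e) - (1 + ‖t • ζ‖ ^ 2) ^ (-e))
          = (1 + ‖t • ζ‖ ^ 2) ^ (-e) - (1 + ‖x + t • ζ‖ ^ 2) ^ (-e) := by ring
        _ ≤ e * (1 + ‖t • ζ‖ ^ 2) ^ (-e - 1) * (‖x + t • ζ‖ ^ 2 - ‖t • ζ‖ ^ 2) := hmvt
        _ ≤ e * (c₁ * t) ^ (-ρ - 2) * (n ^ 2 + 2 * t * c₂ * n) := by
            have h0 : (0:ℝ) ≤ ‖x + t • ζ‖ ^ 2 - ‖t • ζ‖ ^ 2 := by linarith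
            have h0' : (0:ℝ) ≤ (1 + ‖t • ζ‖ ^ 2) ^ (-e - 1) :=
              Real.rpow_nonneg (by positivity) _
            have := mul_le_mul hstep hdiff h0 (Real.rpow_nonneg hct.le _)
            nlinarith
  -- integrability of h
  have hintA : IntegrableOn (fun t : ℝ => h t) (Ioc 0 T) := by
    have h1 : IntegrableOn (fun t : ℝ => 2 * c₁ ^ (-ρ) * t ^ (-ρ)) (Ioc 0 T) := by
      have := (intervalIntegral.intervalIntegrable_rpow' (a := 0) (b := T)
        (r := -ρ) (by linarith))
      exact ((intervalIntegrable_iff_integrableOn_Ioc_of_le hT.le).mp this).const_mul _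
    refine h1.congr_fun (fun t ht => ?_) measurableSet_Ioc
    simp only [hh_def, if_pos ht.2]
    rw [Real.mul_rpow hc₁.le ht.1.le]
    ring
  have hintB : IntegrableOn (fun t : ℝ => h t) (Ioi T) := by
    have h1 : IntegrableOn (fun t : ℝ =>
        e * c₁ ^ (-ρ - 2) * n ^ 2 * t ^ (-ρ - 2)
          + 2 * e * c₁ ^ (-ρ - 2) * c₂ * n * t ^ (-ρ - 1)) (Ioi T) := by
      exact ((integrableOn_Ioi_rpow_of_lt (by linarith) hT).const_mul _).add
        ((integrableOn_Ioi_rpow_of_lt (by linarith) hT).const_mul _)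
    refine h1.congr_fun (fun t ht => ?_) measurableSet_Ioi
    rw [mem_Ioi] at ht
    have ht0 : (0:ℝ) < t := hT.trans ht
    simp only [hh_def, if_neg (not_le.mpr ht)]
    rw [Real.mul_rpow hc₁.le ht0.le]
    have : t ^ (-ρ - 1) = t ^ (-ρ - 2) * t := by
      rw [← Real.rpow_add_one ht0.ne' (-ρ - 2)]; ring_nf
    rw [this]; ring
  have hinth : IntegrableOn (fun t : ℝ => h t) (Ioi 0) := by
    rw [← Ioc_union_Ioi_eq_Ioi hT.le]
    exact hintA.union hintB
  -- reduce to integral of h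
  rw [abs_mul, abs_of_pos hη, MeasureTheory.integral_Ici_eq_integral_Ioi]
  have hIle : |∫ t in Ioi (0:ℝ), g t| ≤ ∫ t in Ioi (0:ℝ), h t := by
    rw [← Real.norm_eq_abs]
    refine norm_integral_le_of_norm_le hinth ?_
    refine (ae_restrict_iff' measurableSet_Ioi).mpr (Filter.Eventually.of_forall ?_)
    intro t ht
    rw [Real.norm_eq_abs]
    exact key t ht
  -- evaluate the integral of h
  have hsplit : ∫ t in Ioi (0:ℝ), h t = (∫ t in Ioc 0 T, h t) + ∫ t in Ioi T, h t := by
    rw [← setIntegral_union (Ioc_disjoint_Ioi le_rfl) measurableSet_Ioi hintA hintB,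
      Ioc_union_Ioi_eq_Ioi hT.le]
  have hval0 : ∫ t in Ioc (0:ℝ) T, t ^ (-ρ) = T ^ (1 - ρ) / (1 - ρ) := by
    rw [← intervalIntegral.integral_of_le hT.le,
      integral_rpow (Or.inl (by linarith : (-1:ℝ) < -ρ)),
      Real.zero_rpow (by intro hc; linarith : -ρ + 1 ≠ 0)]
    ring_nf
  have hvalA : ∫ t in Ioc (0:ℝ) T, h t = 2 * c₁ ^ (-ρ) * (T ^ (1 - ρ) / (1 - ρ)) := by
    rw [← hval0, ← integral_const_mul]
    refine setIntegral_congr_fun measurableSet_Ioc (fun t ht => ?_)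
    simp only [hh_def, if_pos ht.2]
    rw [Real.mul_rpow hc₁.le ht.1.le]
    ring
  have hval1 : ∫ t in Ioi T, t ^ (-ρ - 2) = T ^ (-ρ - 1) / (ρ + 1) := by
    rw [integral_Ioi_rpow_of_lt (by linarith) hT]
    rw [show -ρ - 2 + 1 = -ρ - 1 by ring,
      div_eq_div_iff (by linarith : -ρ - 1 ≠ (0:ℝ)) (by linarith : ρ + 1 ≠ (0:ℝ))]
    ring
  have hval2 : ∫ t in Ioi T, t ^ (-ρ - 1) = T ^ (-ρ) / ρ := by
    rw [integral_Ioi_rpow_of_lt (by linarith) hT]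
    rw [show -ρ - 1 + 1 = -ρ by ring,
      div_eq_div_iff (by linarith : -ρ ≠ (0:ℝ)) (by linarith : ρ ≠ (0:ℝ))]
    ring
  have hvalB : ∫ t in Ioi T, h t
      = e * c₁ ^ (-ρ - 2) * n ^ 2 * (T ^ (-ρ - 1) / (ρ + 1))
        + 2 * e * c₁ ^ (-ρ - 2) * c₂ * n * (T ^ (-ρ) / ρ) := by
    rw [← hval1, ← hval2, ← integral_const_mul, ← integral_const_mul,
      ← integral_add (((integrableOn_Ioi_rpow_of_lt (by linarith) hT).const_mul _))
        (((integrableOn_Ioi_rpow_of_lt (by linarith) hT).const_mul _))]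
    refine setIntegral_congr_fun measurableSet_Ioi (fun t ht => ?_)
    rw [mem_Ioi] at ht
    have ht0 : (0:ℝ) < t := hT.trans ht
    simp only [hh_def, if_neg (not_le.mpr ht)]
    rw [Real.mul_rpow hc₁.le ht0.le]
    have : t ^ (-ρ - 1) = t ^ (-ρ - 2) * t := by
      rw [← Real.rpow_add_one ht0.ne' (-ρ - 2)]; ring_nf
    rw [this]; ring
  -- final algebra
  have h1n : (0:ℝ) < 1 + n := by positivity
  have hTpow : ∀ q : ℝ, T ^ q = (1 + n) ^ q / c₁ ^ q := fun q =>
    Real.div_rpow h1n.le hc₁.le q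
  have h1ρ : (1:ℝ) - ρ ≠ 0 := by intro hc; linarith
  have hc₁0 : c₁ ≠ 0 := ne_of_gt hc₁
  have hF1 : 2 * c₁ ^ (-ρ) * (T ^ (1 - ρ) / (1 - ρ))
      = 2 / (c₁ * (1 - ρ)) * (1 + n) ^ (1 - ρ) := by
    rw [hTpow]
    have hd : c₁ ^ (-ρ) / c₁ ^ (1 - ρ) = 1 / c₁ := by
      rw [← Real.rpow_sub hc₁, show -ρ - (1 - ρ) = -1 by ring, Real.rpow_neg_one]
      exact (one_div c₁).symm
    calc 2 * c₁ ^ (-ρ) * ((1 + n) ^ (1 - ρ) / c₁ ^ (1 - ρ) / (1 - ρ))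
        = 2 * (c₁ ^ (-ρ) / c₁ ^ (1 - ρ)) * (1 + n) ^ (1 - ρ) / (1 - ρ) := by ring
      _ = 2 * (1 / c₁) * (1 + n) ^ (1 - ρ) / (1 - ρ) := by rw [hd]
      _ = 2 / (c₁ * (1 - ρ)) * (1 + n) ^ (1 - ρ) := by field_simp
  have hsq : n ^ 2 * (1 + n) ^ (-ρ - 1) ≤ (1 + n) ^ (1 - ρ) := by
    have h2 : ((1 + n) ^ 2 : ℝ) * (1 + n) ^ (-ρ - 1) = (1 + n) ^ (1 - ρ) := by
      rw [← Real.rpow_natCast (1 + n) 2, ← Real.rpow_add h1n]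
      congr 1
      push_cast
      ring
    calc n ^ 2 * (1 + n) ^ (-ρ - 1) ≤ (1 + n) ^ 2 * (1 + n) ^ (-ρ - 1) := by
          have : (0:ℝ) ≤ (1 + n) ^ (-ρ - 1) := Real.rpow_nonneg h1n.le _
          nlinarith
      _ = (1 + n) ^ (1 - ρ) := h2
  have hlin : n * (1 + n) ^ (-ρ) ≤ (1 + n) ^ (1 - ρ) := by
    have h2 : (1 + n) * (1 + n) ^ (-ρ) = (1 + n) ^ (1 - ρ) := by
      nth_rewrite 1 [← Real.rpow_one (1 + n)]
      rw [← Real.rpow_add h1n]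
      congr 1
    calc n * (1 + n) ^ (-ρ) ≤ (1 + n) * (1 + n) ^ (-ρ) := by
          have : (0:ℝ) ≤ (1 + n) ^ (-ρ) := Real.rpow_nonneg h1n.le _
          nlinarith
      _ = (1 + n) ^ (1 - ρ) := h2
  have hd1 : c₁ ^ (-ρ - 2) / c₁ ^ (-ρ - 1) = 1 / c₁ := by
    rw [← Real.rpow_sub hc₁, show -ρ - 2 - (-ρ - 1) = -1 by ring, Real.rpow_neg_one]
    exact (one_div c₁).symm
  have hd2 : c₁ ^ (-ρ - 2) / c₁ ^ (-ρ) = 1 / c₁ ^ 2 := by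
    rw [← Real.rpow_sub hc₁, show -ρ - 2 - (-ρ) = -2 by ring,
      show (-2:ℝ) = -((2:ℕ):ℝ) by norm_num, Real.rpow_neg hc₁.le, Real.rpow_natCast]
    exact (one_div _).symm
  have hB1 : e * c₁ ^ (-ρ - 2) * n ^ 2 * (T ^ (-ρ - 1) / (ρ + 1))
      ≤ 1 / (2 * c₁) * (1 + n) ^ (1 - ρ) := by
    rw [hTpow]
    have h3 : e / (ρ + 1) ≤ 1 / 2 := by
      rw [he_def, div_le_div_iff₀ (by linarith) (by norm_num)]
      linarith
    have h5 : e / (ρ + 1) * (n ^ 2 * (1 + n) ^ (-ρ - 1)) ≤ 1 / 2 * (1 + n) ^ (1 - ρ) :=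
      mul_le_mul h3 hsq (by positivity) (by norm_num)
    have h6 : (0:ℝ) ≤ 1 / c₁ := by positivity
    have h7 := mul_le_mul_of_nonneg_left h5 h6
    calc e * c₁ ^ (-ρ - 2) * n ^ 2 * ((1 + n) ^ (-ρ - 1) / c₁ ^ (-ρ - 1) / (ρ + 1))
        = (c₁ ^ (-ρ - 2) / c₁ ^ (-ρ - 1)) * (e / (ρ + 1) * (n ^ 2 * (1 + n) ^ (-ρ - 1))) := by
          ring
      _ = 1 / c₁ * (e / (ρ + 1) * (n ^ 2 * (1 + n) ^ (-ρ - 1))) := by rw [hd1]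
      _ ≤ 1 / c₁ * (1 / 2 * (1 + n) ^ (1 - ρ)) := h7
      _ = 1 / (2 * c₁) * (1 + n) ^ (1 - ρ) := by
          field_simp
  have hB2 : 2 * e * c₁ ^ (-ρ - 2) * c₂ * n * (T ^ (-ρ) / ρ)
      ≤ c₂ / c₁ ^ 2 * (1 + n) ^ (1 - ρ) := by
    rw [hTpow]
    have h2e : 2 * e / ρ = 1 := by rw [he_def]; field_simp
    have h6 : (0:ℝ) ≤ c₂ / c₁ ^ 2 := by positivity
    have h7 := mul_le_mul_of_nonneg_left hlin h6
    calc 2 * e * c₁ ^ (-ρ - 2) * c₂ * n * ((1 + n) ^ (-ρ) / c₁ ^ (-ρ) / ρ)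
        = 2 * e / ρ * c₂ * (c₁ ^ (-ρ - 2) / c₁ ^ (-ρ)) * (n * (1 + n) ^ (-ρ)) := by ring
      _ = c₂ / c₁ ^ 2 * (n * (1 + n) ^ (-ρ)) := by rw [h2e, hd2]; ring
      _ ≤ c₂ / c₁ ^ 2 * (1 + n) ^ (1 - ρ) := h7
  have hKF : ∫ t in Ioi (0:ℝ), h t
      ≤ (2 / (c₁ * (1 - ρ)) + 1 / (2 * c₁) + c₂ / c₁ ^ 2) * (1 + n) ^ (1 - ρ) := by
    rw [hsplit, hvalA, hvalB, hF1]
    linarith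
  calc η * |∫ t in Ioi (0:ℝ), g t|
      ≤ η * ((2 / (c₁ * (1 - ρ)) + 1 / (2 * c₁) + c₂ / c₁ ^ 2) * (1 + n) ^ (1 - ρ)) :=
        mul_le_mul_of_nonneg_left (le_trans hIle hKF) hη.le
    _ = η * (2 / (c₁ * (1 - ρ)) + 1 / (2 * c₁) + c₂ / c₁ ^ 2) * (1 + n) ^ (1 - ρ) := by
        ring
end
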